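/- Let Q ⊂ ℝ² be a centrally symmetric convex polygon with vertices v_1, …, v_{2N} in anticlockwise order (v_{k+N} = −v_k), edges e_k = v_{k+1} − v_k, and supporting functionals α_k = ω(e_k, ·)/ω(e_k, v_k), where ω is the standard symplectic form. Define σ_k = α_k^ω − α_{k−1}^ω, where α^ω denotes the symplectic dual (ω(α^ω, ·) = α). Then σ_k is a positive scalar multiple of v_k; precisely σ_k = α_k(σ_k)·v_k with α_k(σ_k) > 0. -/

import Mathlib

/-- The standard symplectic form on the plane: `ω((x,y),(x',y')) = xy' − x'y`. -/
noncomputable def symp (v w : ℝ × ℝ) : ℝ := v.1 * w.2 - v.2 * w.1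

/-- The `k`-th edge `e_k = v_{k+1} − v_k` of a polygon with vertices `v`. -/
noncomputable def edgeV {M : ℕ} (v : ZMod M → ℝ × ℝ) (k : ZMod M) : ℝ × ℝ :=
  v (k + 1) - v k

/-- The supporting functional of the `k`-th edge, `α_k = ω(e_k,·)/ω(e_k,v_k)`,
evaluated at `w`. -/
noncomputable def alphaF {M : ℕ} (v : ZMod M → ℝ × ℝ) (k : ZMod M) (w : ℝ × ℝ) : ℝ :=
  symp (edgeV v k) w / symp (edgeV v k) (v k)

/-- The symplectic dual `α_k^ω = e_k / ω(e_k, v_k)`, i.e. the unique vector with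
`ω(α_k^ω, ·) = α_k`. -/
noncomputable def alphaDual {M : ℕ} (v : ZMod M → ℝ × ℝ) (k : ZMod M) : ℝ × ℝ :=
  (symp (edgeV v k) (v k))⁻¹ • edgeV v k

/-- The `k`-th edge `σ_k = α_k^ω − α_{k−1}^ω` of the isoperimetrix. -/
noncomputable def sigmaV {M : ℕ} (v : ZMod M → ℝ × ℝ) (k : ZMod M) : ℝ × ℝ :=
  alphaDual v k - alphaDual v (k - 1)

/-- For a centrally symmetric convex polygon `Q` with vertices `v_1,…,v_{2N}` in
anticlockwise order (`v_{k+N} = −v_k`, `ω(v_{k+1},v_k) < 0`, and consecutive edges turn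
left: `ω(e_{k−1},e_k) > 0`), the vector `σ_k = α_k^ω − α_{k−1}^ω` is a positive scalar
multiple of `v_k`; precisely `σ_k = α_k(σ_k)•v_k` with `α_k(σ_k) > 0`. -/
theorem statement17 (N : ℕ) (hN : 0 < N) (v : ZMod (2 * N) → ℝ × ℝ)
    (hsym : ∀ k : ZMod (2 * N), v (k + (N : ZMod (2 * N))) = -v k)
    (hpos : ∀ k : ZMod (2 * N), symp (v (k + 1)) (v k) < 0)
    (hconv : ∀ k : ZMod (2 * N), 0 < symp (edgeV v (k - 1)) (edgeV v k)) :
    ∀ k : ZMod (2 * N),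
      sigmaV v k = alphaF v k (sigmaV v k) • v k ∧ 0 < alphaF v k (sigmaV v k) := by
  intro k
  have hk : k - 1 + 1 = k := by ring
  have h1 := hpos k
  have h2 := hpos (k - 1)
  rw [hk] at h2
  have h3 := hconv k
  simp only [sigmaV, alphaDual, alphaF, edgeV, symp, hk, Prod.ext_iff, Prod.smul_fst,
    Prod.smul_snd, Prod.fst_sub, Prod.snd_sub, smul_eq_mul] at *
  set a1 := (v (k - 1)).1 with ha1
  set a2 := (v (k - 1)).2 with ha2
  set b1 := (v k).1 with hb1
  set b2 := (v k).2 with hb2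
  set c1 := (v (k + 1)).1 with hc1
  set c2 := (v (k + 1)).2 with hc2
  have hp : (c1 - b1) * b2 - (c2 - b2) * b1 < 0 := by
    have e : (c1 - b1) * b2 - (c2 - b2) * b1 = c1 * b2 - c2 * b1 := by ring
    rw [e]; exact h1
  have hq : (b1 - a1) * a2 - (b2 - a2) * a1 < 0 := by
    have e : (b1 - a1) * a2 - (b2 - a2) * a1 = b1 * a2 - b2 * a1 := by ring
    rw [e]; exact h2
  have hp' : (c1 - b1) * b2 - (c2 - b2) * b1 ≠ 0 := ne_of_lt hp
  have hq' : (b1 - a1) * a2 - (b2 - a2) * a1 ≠ 0 := ne_of_lt hq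
  refine ⟨⟨?_, ?_⟩, ?_⟩
  · have eP := inv_mul_cancel₀ hp'
    have eQ := inv_mul_cancel₀ hq'
    linear_combination (-(c1 - b1) * ((c1 - b1) * b2 - (c2 - b2) * b1)⁻¹) * eQ +
      ((b1 - a1) * ((b1 - a1) * a2 - (b2 - a2) * a1)⁻¹) * eP
  · have eP := inv_mul_cancel₀ hp'
    have eQ := inv_mul_cancel₀ hq'
    linear_combination (-(c2 - b2) * ((c1 - b1) * b2 - (c2 - b2) * b1)⁻¹) * eQ +
      ((b2 - a2) * ((b1 - a1) * a2 - (b2 - a2) * a1)⁻¹) * eP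
  · refine div_pos_iff.mpr (Or.inr ⟨?_, hp⟩)
    have e : (c1 - b1) * (((c1 - b1) * b2 - (c2 - b2) * b1)⁻¹ * (c2 - b2) -
          ((b1 - a1) * a2 - (b2 - a2) * a1)⁻¹ * (b2 - a2)) -
        (c2 - b2) * (((c1 - b1) * b2 - (c2 - b2) * b1)⁻¹ * (c1 - b1) -
          ((b1 - a1) * a2 - (b2 - a2) * a1)⁻¹ * (b1 - a1)) =
        ((b1 - a1) * (c2 - b2) - (b2 - a2) * (c1 - b1)) /
          ((b1 - a1) * a2 - (b2 - a2) * a1) := by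
      field_simp
      ring
    rw [e]
    exact div_neg_of_pos_of_neg h3 hq
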